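/- Let A = R[x, ξ] be the free graded-commutative algebra over a Q-algebra R with x in degree 0 and ξ in cohomological degree −2, with zero differential. Define the right connection ∇ on A by ∇(a ∂_x + b ∂_ξ) = −∂a/∂x − ∂b/∂ξ. Then contraction with dx ∧ dξ defines an isomorphism of complexes from the right de Rham complex DR^r(A, ∇) to the de Rham complex DR(A), and DR(A) is quasi-isomorphic to R (concentrated in degree 0). -/

import Mathlib

/-!  STATEMENT 4: Let `A = R[x, ξ]` (x of degree 0, ξ of cohomological degree −2, zero
differential) with the right connection `∇(a∂x + b∂ξ) = −∂a/∂x − ∂b/∂ξ`.  Then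
contraction with `dx ∧ dξ` is an isomorphism of complexes from the right de Rham complex
`DR^r(A,∇)` to the de Rham complex `DR(A)`, and `DR(A)` is quasi-isomorphic to `R`
(concentrated in degree 0).

Since `ξ` has even degree, the underlying commutative algebra of `A` is the polynomial
ring `MvPolynomial (Fin 2) R` (with `X 0 = x`, `X 1 = ξ`); `Ω¹` is free on `dx, dξ` and
`Ω²` is free on `dx ∧ dξ`; `DR^r(A,∇)` is the complex of polyvectors
`A·∂x∂ξ → A·∂x ⊕ A·∂ξ → A` with differential `D^∇`. -/

open MvPolynomial

section StmtAux
open MvPolynomial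
set_option linter.unusedSectionVars false

variable {R : Type*} [CommRing R] [Algebra ℚ R]

noncomputable def integ (i : Fin 2) (p : MvPolynomial (Fin 2) R) : MvPolynomial (Fin 2) R :=
  (AddMonoidAlgebra.coeff p).sum fun m c => ((m i + 1 : ℚ))⁻¹ • monomial (m + Finsupp.single i 1) c

lemma integ_monomial (i : Fin 2) (m : Fin 2 →₀ ℕ) (c : R) :
    integ i (monomial m c) = ((m i + 1 : ℚ))⁻¹ • monomial (m + Finsupp.single i 1) c := by
  rw [integ, ← single_eq_monomial m c, AddMonoidAlgebra.coeff_single, Finsupp.sum_single_index]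
  simp

lemma integ_add (i : Fin 2) (p q : MvPolynomial (Fin 2) R) :
    integ i (p + q) = integ i p + integ i q := by
  unfold integ
  rw [AddMonoidAlgebra.coeff_add]
  exact Finsupp.sum_add_index (by simp) (by intros; simp [map_add, smul_add])

lemma integ_zero (i : Fin 2) : integ i (0 : MvPolynomial (Fin 2) R) = 0 := by
  simp [integ]

lemma pderiv_qsmul (j : Fin 2) (q : ℚ) (p : MvPolynomial (Fin 2) R) :
    pderiv j (q • p) = q • pderiv j p := by
  rw [← algebraMap_smul R q p, (pderiv j).map_smul, algebraMap_smul]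

lemma add_single_sub_single (i : Fin 2) (m : Fin 2 →₀ ℕ) :
    (m + Finsupp.single i 1) - Finsupp.single i 1 = m := by
  ext k
  simp [Finsupp.tsub_apply, Finsupp.single_apply]

lemma add_single_apply_self (i : Fin 2) (m : Fin 2 →₀ ℕ) :
    (m + Finsupp.single i 1 : Fin 2 →₀ ℕ) i = m i + 1 := by
  simp

lemma pderiv_integ_self (i : Fin 2) (p : MvPolynomial (Fin 2) R) :
    pderiv i (integ i p) = p := by
  induction p using MvPolynomial.induction_on' with
  | monomial m c =>
    rw [integ_monomial, pderiv_qsmul, pderiv_monomial, add_single_sub_single,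
      add_single_apply_self]
    have : (monomial m) (c * ((m i + 1 : ℕ) : R)) = ((m i : ℚ) + 1) • monomial m c := by
      rw [smul_monomial]
      congr 1
      have hq : ((m i : ℚ) + 1) = ((m i + 1 : ℕ) : ℚ) := by push_cast; ring
      rw [Algebra.smul_def, hq, map_natCast, mul_comm]
    rw [this, smul_smul]

    rw [inv_mul_cancel₀ (by positivity), one_smul]
  | add p q hp hq => rw [integ_add, map_add, hp, hq]

lemma pderiv_integ_comm {i j : Fin 2} (h : j ≠ i) (p : MvPolynomial (Fin 2) R) :
    pderiv j (integ i p) = integ i (pderiv j p) := by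
  induction p using MvPolynomial.induction_on' with
  | monomial m c =>
    rw [integ_monomial, pderiv_qsmul, pderiv_monomial, pderiv_monomial, integ_monomial]
    have h1 : (m + Finsupp.single i 1) - Finsupp.single j 1
        = (m - Finsupp.single j 1) + Finsupp.single i 1 := by
      ext k
      simp only [Finsupp.tsub_apply, Finsupp.add_apply, Finsupp.single_apply]
      split_ifs with h1 h2 <;> omega
    have h2 : (m + Finsupp.single i 1 : Fin 2 →₀ ℕ) j = m j := by
      simp [Finsupp.single_apply, Ne.symm h]
    have h3 : (m - Finsupp.single j 1 : Fin 2 →₀ ℕ) i = m i := by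
      simp [Finsupp.tsub_apply, Finsupp.single_apply, h]
    rw [h1, h2, h3]
  | add p q hp hq => rw [integ_add, map_add, map_add, hp, hq, integ_add]

lemma coeff_pderiv (i : Fin 2) (m : Fin 2 →₀ ℕ) (p : MvPolynomial (Fin 2) R) :
    coeff m (pderiv i p) = (m i + 1 : ℕ) * coeff (m + Finsupp.single i 1) p := by
  induction p using MvPolynomial.induction_on' with
  | monomial s a =>
    rw [pderiv_monomial, coeff_monomial, coeff_monomial]
    rcases Nat.eq_zero_or_pos (s i) with h0 | h0
    · have : s ≠ m + Finsupp.single i 1 := by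
        intro hs; rw [hs] at h0; rw [add_single_apply_self] at h0; omega
      rw [if_neg this, h0, mul_zero]
      simp
    · rcases eq_or_ne s (m + Finsupp.single i 1) with rfl | hs
      · rw [add_single_sub_single, if_pos rfl, if_pos rfl, add_single_apply_self]
        push_cast
        ring
      · rw [if_neg hs, mul_zero]
        have : s - Finsupp.single i 1 ≠ m := by
          intro hm
          apply hs
          rw [← hm]
          ext k
          simp only [Finsupp.tsub_apply, Finsupp.add_apply, Finsupp.single_apply]
          split_ifs with hk
          · subst hk; omega
          · omega
        rw [if_neg this]
  | add p q hp hq => rw [map_add, coeff_add, coeff_add, hp, hq, mul_add]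

lemma coeff_eq_zero_of_pderiv {i : Fin 2} {p : MvPolynomial (Fin 2) R}
    (h : pderiv i p = 0) {m : Fin 2 →₀ ℕ} (hi : m i ≠ 0) : coeff m p = 0 := by
  set m' : Fin 2 →₀ ℕ := m - Finsupp.single i 1 with hm'
  have hmm : m' + Finsupp.single i 1 = m := by
    ext k
    simp only [hm', Finsupp.tsub_apply, Finsupp.add_apply, Finsupp.single_apply]
    split_ifs with hk
    · subst hk; omega
    · omega
  have key := coeff_pderiv i m' p
  rw [hmm, h] at key
  simp only [coeff_zero] at key
  set n : ℕ := m' i + 1 with hn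
  have hnz : ((n : ℚ)) ≠ 0 := by positivity
  have h2 : (n : ℚ) • coeff m p = 0 := by
    rw [Nat.cast_smul_eq_nsmul, nsmul_eq_mul]
    exact key.symm
  have h3 := congrArg (fun z => ((n : ℚ))⁻¹ • z) h2
  simp only [smul_smul, smul_zero] at h3
  rwa [inv_mul_cancel₀ hnz, one_smul] at h3

lemma eq_C_of_pderiv_eq_zero (p : MvPolynomial (Fin 2) R)
    (h0 : pderiv 0 p = 0) (h1 : pderiv 1 p = 0) : p = C (coeff 0 p) := by
  ext m
  rw [coeff_C]
  rcases eq_or_ne (0 : Fin 2 →₀ ℕ) m with rfl | hm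
  · simp
  · rw [if_neg hm]
    have : m 0 ≠ 0 ∨ m 1 ≠ 0 := by
      by_contra hc
      push_neg at hc
      apply hm
      ext k
      fin_cases k <;> simp [hc.1, hc.2]
    rcases this with hi | hi
    · exact coeff_eq_zero_of_pderiv h0 hi
    · exact coeff_eq_zero_of_pderiv h1 hi

lemma pderiv_pderiv_comm {i j : Fin 2} (h : i ≠ j) (p : MvPolynomial (Fin 2) R) :
    pderiv j (pderiv i p) = pderiv i (pderiv j p) := by
  induction p using MvPolynomial.induction_on' with
  | monomial s a =>
    rw [pderiv_monomial, pderiv_monomial, pderiv_monomial, pderiv_monomial]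
    have e1 : (s - Finsupp.single i 1) - Finsupp.single j 1
        = (s - Finsupp.single j 1) - Finsupp.single i 1 := by
      ext k
      simp only [Finsupp.tsub_apply, Finsupp.single_apply]
      split_ifs <;> omega
    have e2 : (s - Finsupp.single i 1 : Fin 2 →₀ ℕ) j = s j := by
      simp [Finsupp.tsub_apply, Finsupp.single_apply, h]
    have e3 : (s - Finsupp.single j 1 : Fin 2 →₀ ℕ) i = s i := by
      simp [Finsupp.tsub_apply, Finsupp.single_apply, Ne.symm h]
    rw [e1, e2, e3]
    congr 1
    ring
  | add p q hp hq => simp only [map_add, hp, hq]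

end StmtAux

theorem stmt4 (R : Type*) [CommRing R] [Algebra ℚ R] :
    -- de Rham differential `d : A → Ω¹ = A·dx ⊕ A·dξ`
    let d0 : MvPolynomial (Fin 2) R → MvPolynomial (Fin 2) R × MvPolynomial (Fin 2) R :=
      fun a => (pderiv 0 a, pderiv 1 a)
    -- de Rham differential `d : Ω¹ → Ω² = A·dx∧dξ`
    let d1 : MvPolynomial (Fin 2) R × MvPolynomial (Fin 2) R → MvPolynomial (Fin 2) R :=
      fun uv => pderiv 0 uv.2 - pderiv 1 uv.1
    -- right de Rham differential on bivectors `c·∂x∂ξ`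
    let δ2 : MvPolynomial (Fin 2) R → MvPolynomial (Fin 2) R × MvPolynomial (Fin 2) R :=
      fun c => (pderiv 1 c, - pderiv 0 c)
    -- right de Rham differential on vector fields: `D^∇(a∂x + b∂ξ) = ∇(a∂x + b∂ξ)`
    let δ1 : MvPolynomial (Fin 2) R × MvPolynomial (Fin 2) R → MvPolynomial (Fin 2) R :=
      fun ab => - pderiv 0 ab.1 - pderiv 1 ab.2
    -- contraction with `dx ∧ dξ`, levelwise
    let φ2 : MvPolynomial (Fin 2) R → MvPolynomial (Fin 2) R := fun c => c
    let φ1 : MvPolynomial (Fin 2) R × MvPolynomial (Fin 2) R →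
        MvPolynomial (Fin 2) R × MvPolynomial (Fin 2) R := fun ab => (- ab.2, ab.1)
    let φ0 : MvPolynomial (Fin 2) R → MvPolynomial (Fin 2) R := fun f => - f
    -- contraction with `dx ∧ dξ` is an isomorphism of complexes `DR^r(A,∇) → DR(A)`:
    ((∀ c, d0 (φ2 c) = φ1 (δ2 c)) ∧
     (∀ ab, d1 (φ1 ab) = φ0 (δ1 ab)) ∧
     Function.Bijective φ2 ∧ Function.Bijective φ1 ∧ Function.Bijective φ0) ∧
    -- and `DR(A)` is quasi-isomorphic to `R`, concentrated in degree 0: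
    (Function.Injective (C : R → MvPolynomial (Fin 2) R) ∧
     (∀ a, d0 a = 0 ↔ ∃ r : R, a = C r) ∧
     (∀ uv, d1 uv = 0 → ∃ a, d0 a = uv) ∧
     (∀ w, ∃ uv, d1 uv = w)) := by
  intro d0 d1 δ2 δ1 φ2 φ1 φ0
  refine ⟨⟨?_, ?_, ?_, ?_, ?_⟩, ?_, ?_, ?_, ?_⟩
  · intro c
    simp [d0, φ2, φ1, δ2]
  · intro ab
    simp only [d1, φ1, φ0, δ1, map_neg]
    ring
  · exact Function.bijective_id
  · exact Function.bijective_iff_has_inverse.mpr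
      ⟨fun ab => (ab.2, - ab.1), fun ab => by simp [φ1], fun ab => by simp [φ1]⟩
  · exact (Equiv.neg _).bijective
  · exact C_injective (Fin 2) R
  · intro a
    constructor
    · intro h
      have h0 : pderiv 0 a = 0 := congrArg Prod.fst h
      have h1 : pderiv 1 a = 0 := congrArg Prod.snd h
      exact ⟨coeff 0 a, eq_C_of_pderiv_eq_zero a h0 h1⟩
    · rintro ⟨r, rfl⟩
      simp only [d0, pderiv_C]
      rfl
  · intro uv h
    obtain ⟨u, v⟩ := uv
    simp only [d1] at h
    have hclosed : pderiv 0 v = pderiv 1 u := by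
      have := sub_eq_zero.mp h
      simpa using this
    set w : MvPolynomial (Fin 2) R := v - pderiv 1 (integ 0 u) with hw
    have hw0 : pderiv 0 w = 0 := by
      rw [hw, map_sub, hclosed, pderiv_pderiv_comm (by decide) (integ 0 u),
        pderiv_integ_self, sub_self]
    refine ⟨integ 0 u + integ 1 w, ?_⟩
    simp only [d0, map_add]
    refine Prod.ext ?_ ?_
    · show pderiv 0 (integ 0 u) + pderiv 0 (integ 1 w) = u
      rw [pderiv_integ_self, pderiv_integ_comm (by decide), hw0, integ_zero, add_zero]
    · show pderiv 1 (integ 0 u) + pderiv 1 (integ 1 w) = v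
      rw [pderiv_integ_self, hw]
      ring
  · intro w
    refine ⟨(0, integ 0 w), ?_⟩
    simp only [d1, map_zero]
    rw [pderiv_integ_self, sub_zero]
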